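/- Suppose K < 0 and h(0) + rK < 0, let δ† > 0 be the unique solution of ∫_δ^∞ s^{−n−1}[h(s) + rK] ds = 0, and define H₁(α) = −rK₁α^{−n} − n∫_{δ†}^α s^{−n−1}[h(s) + rK] ds for α ≥ δ†. Set ᾰ := inf{x > 0 : h(x) + rK − rK₁ ≥ 0} (which satisfies ᾰ > δ†). Then there exists a unique α̂ ∈ (δ†, ᾰ) such that H₁(α) < 0 for all α ∈ [δ†, α̂) and H₁(α) > 0 for all α ∈ (α̂, ∞). -/

import Mathlib

open MeasureTheory Set Filter Topology

set_option linter.unusedVariables false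

/-- `h(0) := lim_{x↓0} h(x) ∈ [-∞, ∞)`; for a right-continuous increasing `h` this is the
infimum of `h` over `(0, ∞)`, viewed in the extended reals. -/
noncomputable def hZero (h : ℝ → ℝ) : EReal := ⨅ x ∈ Set.Ioi (0 : ℝ), (h x : EReal)

/-- The particular solution `R_h` to the ODE `σ²x²w'' + bxw' - rw + h = 0`. -/
noncomputable def Rh (σ m n : ℝ) (h : ℝ → ℝ) (x : ℝ) : ℝ :=
  (1 / (σ ^ 2 * (n - m))) *
    (x ^ m * (∫ s in Set.Ioc (0 : ℝ) x, s ^ (-m - 1) * h s)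
      + x ^ n * ∫ s in Set.Ioi x, s ^ (-n - 1) * h s)

private lemma exists_pair_aux {h : ℝ → ℝ}
    (hTop : Tendsto h atTop atTop) {a₁ a₂ : ℝ} (h1 : 0 < a₁) (h12 : a₁ < a₂) :
    ∃ x₀ x₁ : ℝ, a₂ ≤ x₀ ∧ x₀ < x₁ ∧ x₁ * a₁ < x₀ * a₂ ∧ h x₀ < h x₁ := by
  by_contra hC
  push_neg at hC
  have ha₂ : 0 < a₂ := h1.trans h12
  have hρ : 1 < a₂ / a₁ := (one_lt_div h1).2 h12
  set s : ℝ := (1 + a₂ / a₁) / 2 with hs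
  have hs1 : 1 < s := by rw [hs]; linarith
  have hsρ : s * a₁ < a₂ := by
    have hlt : s < a₂ / a₁ := by rw [hs]; linarith
    exact (lt_div_iff₀ h1).1 hlt
  have key : ∀ k : ℕ, h (a₂ * s ^ k) ≤ h a₂ := by
    intro k
    induction k with
    | zero => simp
    | succ k ih =>
      have hp : (0:ℝ) < s ^ k := pow_pos (by linarith) k
      have hp1 : (1:ℝ) ≤ s ^ k := one_le_pow₀ hs1.le
      have e1 : a₂ ≤ a₂ * s ^ k := by nlinarith
      have e2 : a₂ * s ^ k < a₂ * s ^ (k+1) := by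
        rw [pow_succ]; nlinarith
      have e3 : a₂ * s ^ (k+1) * a₁ < a₂ * s ^ k * a₂ := by
        rw [pow_succ]; nlinarith
      exact le_trans (hC _ _ e1 e2 e3) ih
  obtain ⟨X, hX⟩ := eventually_atTop.1 (hTop.eventually_ge_atTop (h a₂ + 1))
  have htt : Tendsto (fun k : ℕ => a₂ * s ^ k) atTop atTop :=
    (tendsto_pow_atTop_atTop_of_one_lt hs1).const_mul_atTop ha₂
  obtain ⟨k, hk⟩ := (htt.eventually_ge_atTop X).exists
  have := hX _ hk
  linarith [key k]

set_option maxHeartbeats 1000000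

theorem statement_17
    (r b σ m n : ℝ) (h : ℝ → ℝ)
    (hr : 0 < r) (hσ : σ ≠ 0) (hm : m < 0) (hn : 0 < n)
    (hmRoot : σ ^ 2 * m ^ 2 + (b - σ ^ 2) * m - r = 0)
    (hnRoot : σ ^ 2 * n ^ 2 + (b - σ ^ 2) * n - r = 0)
    (hMono : MonotoneOn h (Set.Ioi 0))
    (hRC : ∀ x : ℝ, 0 < x → ContinuousWithinAt h (Set.Ici x) x)
    (hTop : Tendsto h atTop atTop)
    (hIntZero : ∀ x : ℝ, 0 < x →
      IntegrableOn (fun s : ℝ => s ^ (-m - 1) * h s) (Set.Ioc 0 x))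
    (hIntTop : ∀ x : ℝ, 0 < x →
      IntegrableOn (fun s : ℝ => s ^ (-n - 1) * h s) (Set.Ioi x))
    (K₁ K : ℝ) (hK₁ : 0 < K₁) (hK : K < 0)
    (hcond : hZero h + ((r * K : ℝ) : EReal) < 0)
    (δdag : ℝ) (hδdag : 0 < δdag)
    (hδdagEq : (∫ s in Set.Ioi δdag, s ^ (-n - 1) * (h s + r * K)) = 0) :
    δdag < sInf {x : ℝ | 0 < x ∧ 0 ≤ h x + r * K - r * K₁} ∧
    ∃! αhat : ℝ,
      (δdag < αhat ∧ αhat < sInf {x : ℝ | 0 < x ∧ 0 ≤ h x + r * K - r * K₁}) ∧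
      (∀ α : ℝ, δdag ≤ α → α < αhat →
        -(r * K₁) * α ^ (-n) - n * (∫ s in δdag..α, s ^ (-n - 1) * (h s + r * K)) < 0) ∧
      (∀ α : ℝ, αhat < α →
        0 < -(r * K₁) * α ^ (-n) - n * ∫ s in δdag..α, s ^ (-n - 1) * (h s + r * K)) := by
  have hrK₁ : 0 < r * K₁ := mul_pos hr hK₁
  set f : ℝ → ℝ := fun s => s ^ (-n - 1) * (h s + r * K) with hf
  -- integrability of f on Ioi x
  have hrpowInt : ∀ x : ℝ, 0 < x → IntegrableOn (fun s : ℝ => s ^ (-n - 1)) (Ioi x) :=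
    fun x hx => integrableOn_Ioi_rpow_of_lt (by linarith) hx
  have hfInt : ∀ x : ℝ, 0 < x → IntegrableOn f (Ioi x) := by
    intro x hx
    have h1 := hIntTop x hx
    have h2 : IntegrableOn (fun s : ℝ => s ^ (-n - 1) * (r * K)) (Ioi x) :=
      (hrpowInt x hx).mul_const (r * K)
    have h3 : IntegrableOn (fun s : ℝ => s ^ (-n - 1) * h s + s ^ (-n - 1) * (r * K)) (Ioi x) :=
      h1.add h2
    exact h3.congr_fun (fun s hs => by simp only [hf]; ring) measurableSet_Ioi
  -- splitting of the integral
  have hGsplit : ∀ a c : ℝ, 0 < a → a ≤ c →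
      (∫ s in Ioi a, f s) = (∫ s in Ioc a c, f s) + ∫ s in Ioi c, f s := by
    intro a c ha hac
    rw [← Set.Ioc_union_Ioi_eq_Ioi hac]
    exact setIntegral_union (Set.Ioc_disjoint_Ioi le_rfl) measurableSet_Ioi
      ((hfInt a ha).mono_set Set.Ioc_subset_Ioi_self) (hfInt c (ha.trans_le hac))
  have hInterval : ∀ α : ℝ, δdag ≤ α →
      (∫ s in δdag..α, f s) = - ∫ s in Ioi α, f s := by
    intro α hα
    rw [intervalIntegral.integral_of_le hα]
    have hsp := hGsplit δdag α hδdag hα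
    rw [hδdagEq] at hsp
    linarith
  -- pointwise relation for rescaled integrand
  have heqg : ∀ α : ℝ, 0 < α → ∀ t : ℝ, t ∈ Ioi (1:ℝ) →
      t ^ (-n - 1) * (h (α * t) + r * K) = α ^ (n + 1) * f (α * t) := by
    intro α hα t ht
    have ht0 : (0:ℝ) < t := lt_trans one_pos ht
    have h1 : (α * t) ^ (-n - 1) = α ^ (-n - 1) * t ^ (-n - 1) :=
      Real.mul_rpow hα.le ht0.le
    have h2 : α ^ (n + 1) * α ^ (-n - 1) = 1 := by
      rw [← Real.rpow_add hα]; norm_num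
    calc t ^ (-n - 1) * (h (α * t) + r * K)
        = (α ^ (n + 1) * α ^ (-n - 1)) * (t ^ (-n - 1) * (h (α * t) + r * K)) := by
          rw [h2]; ring
      _ = α ^ (n + 1) * f (α * t) := by simp only [hf, h1]; ring
  have hψInt : ∀ α : ℝ, 0 < α →
      IntegrableOn (fun t : ℝ => t ^ (-n - 1) * (h (α * t) + r * K)) (Ioi 1) := by
    intro α hα
    have h1 : IntegrableOn (fun t : ℝ => f (α * t)) (Ioi 1) := by
      rw [integrableOn_Ioi_comp_mul_left_iff f 1 hα, mul_one]
      exact hfInt α hα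
    have h2 : IntegrableOn (fun t : ℝ => α ^ (n + 1) * f (α * t)) (Ioi 1) :=
      h1.const_mul _
    exact h2.congr_fun (fun t ht => (heqg α hα t ht).symm) measurableSet_Ioi
  have hψeq : ∀ α : ℝ, 0 < α →
      (∫ t in Ioi (1:ℝ), t ^ (-n - 1) * (h (α * t) + r * K)) = α ^ n * ∫ s in Ioi α, f s := by
    intro α hα
    have hc : (∫ t in Ioi (1:ℝ), f (α * t)) = α⁻¹ • ∫ s in Ioi (α * 1), f s :=
      integral_comp_mul_left_Ioi f 1 hα
    rw [setIntegral_congr_fun measurableSet_Ioi (fun t ht => heqg α hα t ht),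
      integral_const_mul, hc, mul_one, smul_eq_mul,
      show α ^ (n+1) = α ^ n * α ^ (1:ℝ) by rw [← Real.rpow_add hα], Real.rpow_one]
    have hα0 : α ≠ 0 := hα.ne'
    field_simp
  have hψmono : ∀ a₁ a₂ : ℝ, 0 < a₁ → a₁ < a₂ →
      (∫ t in Ioi (1:ℝ), t ^ (-n - 1) * (h (a₁ * t) + r * K)) <
        ∫ t in Ioi (1:ℝ), t ^ (-n - 1) * (h (a₂ * t) + r * K) := by
    intro a₁ a₂ ha₁ h12
    have ha₂ : 0 < a₂ := ha₁.trans h12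
    obtain ⟨x₀, x₁, hx0, hx01, hxlt, hglt⟩ := exists_pair_aux hTop ha₁ h12
    have hx₀pos : 0 < x₀ := ha₂.trans_le hx0
    set u : ℝ := x₁ / a₂ with hu
    set v : ℝ := x₀ / a₁ with hv
    have hu1 : 1 < u := (one_lt_div ha₂).2 (lt_of_le_of_lt hx0 hx01)
    have huv : u < v := (div_lt_div_iff₀ ha₂ ha₁).2 (by linarith)
    set ε : ℝ := h x₁ - h x₀ with hε
    have hεpos : 0 < ε := by simp only [hε]; linarith
    set D : ℝ → ℝ := fun t => t ^ (-n - 1) * (h (a₂ * t) + r * K)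
      - t ^ (-n - 1) * (h (a₁ * t) + r * K) with hD
    have hDInt : IntegrableOn D (Ioi 1) := (hψInt a₂ ha₂).sub (hψInt a₁ ha₁)
    have hDnn : ∀ t ∈ Ioi (1:ℝ), 0 ≤ D t := by
      intro t ht
      have ht0 : (0:ℝ) < t := lt_trans one_pos ht
      have h1 : h (a₁ * t) ≤ h (a₂ * t) := hMono (mul_pos ha₁ ht0) (mul_pos ha₂ ht0)
        (by nlinarith)
      have h2 : (0:ℝ) ≤ t ^ (-n - 1) := (Real.rpow_pos_of_pos ht0 _).le
      simp only [hD]; nlinarith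
    have hIccsub : Icc u v ⊆ Ioi (1:ℝ) := fun t ht => lt_of_lt_of_le hu1 ht.1
    have hkey : ∀ t ∈ Icc u v, v ^ (-n - 1) * ε ≤ D t := by
      rintro t ⟨htu, htv⟩
      have ht0 : (0:ℝ) < t := lt_trans one_pos (lt_of_lt_of_le hu1 htu)
      have hta₂ : x₁ ≤ a₂ * t := by
        have := (div_le_iff₀ ha₂).1 htu; linarith
      have hta₁ : a₁ * t ≤ x₀ := by
        have := (le_div_iff₀ ha₁).1 htv; linarith
      have hh2 : h x₁ ≤ h (a₂ * t) := hMono (by exact hx₀pos.trans hx01)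
        (mul_pos ha₂ ht0) hta₂
      have hh1 : h (a₁ * t) ≤ h x₀ := hMono (mul_pos ha₁ ht0) hx₀pos hta₁
      have hrp : v ^ (-n - 1) ≤ t ^ (-n - 1) :=
        Real.rpow_le_rpow_of_nonpos ht0 htv (by linarith)
      have htnn : (0:ℝ) ≤ t ^ (-n - 1) := (Real.rpow_pos_of_pos ht0 _).le
      calc v ^ (-n - 1) * ε ≤ t ^ (-n - 1) * (h (a₂ * t) - h (a₁ * t)) :=
            mul_le_mul hrp (by simp only [hε]; linarith) hεpos.le htnn
        _ = D t := by simp only [hD]; ring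
    have step1 : (∫ t in Icc u v, D t) ≤ ∫ t in Ioi 1, D t :=
      setIntegral_mono_set hDInt ((ae_restrict_iff' measurableSet_Ioi).2 (ae_of_all _ hDnn))
        (HasSubset.Subset.eventuallyLE hIccsub)
    have step2 : (∫ t in Icc u v, (v ^ (-n - 1) * ε)) ≤ ∫ t in Icc u v, D t :=
      setIntegral_mono_on (integrableOn_const measure_Icc_lt_top.ne)
        (hDInt.mono_set hIccsub) measurableSet_Icc hkey
    have hconst : (∫ t in Icc u v, (v ^ (-n - 1) * ε)) = (v - u) * (v ^ (-n - 1) * ε) := by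
      rw [setIntegral_const, measureReal_def, Real.volume_Icc, ENNReal.toReal_ofReal (by linarith), smul_eq_mul]
    have hpos : 0 < (v - u) * (v ^ (-n - 1) * ε) := by
      have hv0 : 0 < v := lt_trans one_pos (lt_trans hu1 huv)
      have hrv := Real.rpow_pos_of_pos hv0 (-n - 1)
      have : 0 < v - u := by linarith
      positivity
    have hsub : (∫ t in Ioi (1:ℝ), D t) =
        (∫ t in Ioi (1:ℝ), t ^ (-n - 1) * (h (a₂ * t) + r * K))
          - ∫ t in Ioi (1:ℝ), t ^ (-n - 1) * (h (a₁ * t) + r * K) :=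
      integral_sub (hψInt a₂ ha₂) (hψInt a₁ ha₁)
    linarith
  set F : ℝ → ℝ := fun α => -(r * K₁) + n * (α ^ n * ∫ s in Ioi α, f s) with hF
  have hFmono : StrictMonoOn F (Ioi 0) := by
    intro a₁ h1 a₂ h2 h12
    have hlt := hψmono a₁ a₂ h1 h12
    rw [hψeq a₁ h1, hψeq a₂ h2] at hlt
    simp only [hF]
    nlinarith
  have hFδ : F δdag = -(r * K₁) := by
    simp only [hF, hδdagEq]
    ring
  have hx₀ex : ∃ x₀ : ℝ, 0 < x₀ ∧ h x₀ + r * K < 0 := by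
    by_contra hc
    push_neg at hc
    have hle : ((-(r * K) : ℝ) : EReal) ≤ hZero h := by
      unfold hZero
      refine le_iInf₂ fun x hx => ?_
      exact EReal.coe_le_coe_iff.2 (by have := hc x hx; linarith)
    have h2 : (0 : EReal) ≤ hZero h + ((r * K : ℝ) : EReal) := by
      calc (0 : EReal) = ((-(r * K) : ℝ) : EReal) + ((r * K : ℝ) : EReal) := by
            rw [← EReal.coe_add]; norm_num
      _ ≤ hZero h + ((r * K : ℝ) : EReal) := add_le_add_left hle _
    exact absurd hcond (not_lt.2 h2)
  obtain ⟨x₀, hx₀pos, hx₀neg⟩ := hx₀ex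
  set S : Set ℝ := {x : ℝ | 0 < x ∧ 0 ≤ h x + r * K - r * K₁} with hSdef
  have hSne : S.Nonempty := by
    obtain ⟨X, hX⟩ := eventually_atTop.1 (hTop.eventually_ge_atTop (r * K₁ - r * K))
    refine ⟨max X 1, lt_of_lt_of_le one_pos (le_max_right _ _), ?_⟩
    have := hX (max X 1) (le_max_left _ _)
    linarith
  have hSlb : ∀ y ∈ S, x₀ ≤ y := by
    intro y hy
    by_contra hlt
    push_neg at hlt
    have h1 := hMono hy.1 (mem_Ioi.2 hx₀pos) hlt.le
    have h2 := hy.2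
    linarith
  set abar : ℝ := sInf S with habar
  have habarx₀ : x₀ ≤ abar := le_csInf hSne hSlb
  have habarpos : 0 < abar := lt_of_lt_of_le hx₀pos habarx₀
  have hge : ∀ s : ℝ, abar < s → r * K₁ ≤ h s + r * K := by
    intro s hs
    obtain ⟨y, hyS, hys⟩ := exists_lt_of_csInf_lt hSne hs
    have h1 := hMono hyS.1 (mem_Ioi.2 (lt_of_lt_of_le hx₀pos (le_trans (hSlb y hyS) hys.le))) hys.le
    have h2 := hyS.2
    linarith
  have hgoal1 : δdag < abar := by
    by_contra hcon
    push_neg at hcon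
    have hmono' : (∫ s in Ioi δdag, (r * K₁) * s ^ (-n - 1)) ≤ ∫ s in Ioi δdag, f s := by
      refine setIntegral_mono_on ((hrpowInt δdag hδdag).const_mul _) (hfInt δdag hδdag)
        measurableSet_Ioi ?_
      intro s hs
      have hs0 : 0 < s := lt_trans hδdag hs
      have h1 : r * K₁ ≤ h s + r * K := hge s (lt_of_le_of_lt hcon hs)
      have h2 : (0:ℝ) ≤ s ^ (-n - 1) := (Real.rpow_pos_of_pos hs0 _).le
      simp only [hf]
      nlinarith
    rw [hδdagEq, integral_const_mul, integral_Ioi_rpow_of_lt (by linarith) hδdag] at hmono'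
    have hδp : (0:ℝ) < δdag ^ (-n - 1 + 1) := Real.rpow_pos_of_pos hδdag _
    have hq : 0 < -δdag ^ (-n - 1 + 1) / (-n - 1 + 1) :=
      div_pos_of_neg_of_neg (by linarith) (by linarith)
    nlinarith
  have hFabar : 0 < F abar := by
    obtain ⟨T, hT⟩ := eventually_atTop.1 (hTop.eventually_ge_atTop (r * K₁ + 1 - r * K))
    have habar0 : abar ≠ 0 := habarpos.ne'
    set c : ℝ := max T (abar + 1) with hcdef
    set T' : ℝ := c / abar with hT'
    have hcgt : abar < c := lt_of_lt_of_le (by linarith) (le_max_right _ _)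
    have hT'1 : 1 < T' := (one_lt_div habarpos).2 hcgt
    have hT'T : T ≤ abar * T' := by
      have e2 : abar * (c / abar) = c := by field_simp
      have e3 : T ≤ c := le_max_left _ _
      rw [hT']; linarith
    have hT'pos : 0 < T' := lt_trans one_pos hT'1
    have hFcInt := hψInt abar habarpos
    have hIocInt : IntegrableOn (fun t : ℝ => t ^ (-n-1) * (h (abar * t) + r * K)) (Ioc 1 T') :=
      hFcInt.mono_set Set.Ioc_subset_Ioi_self
    have hIoiInt : IntegrableOn (fun t : ℝ => t ^ (-n-1) * (h (abar * t) + r * K)) (Ioi T') :=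
      hFcInt.mono_set (Set.Ioi_subset_Ioi hT'1.le)
    have hsplitFc : (∫ t in Ioi (1:ℝ), t ^ (-n-1) * (h (abar * t) + r * K))
        = (∫ t in Ioc (1:ℝ) T', t ^ (-n-1) * (h (abar * t) + r * K))
          + ∫ t in Ioi T', t ^ (-n-1) * (h (abar * t) + r * K) := by
      rw [← Set.Ioc_union_Ioi_eq_Ioi hT'1.le]
      exact setIntegral_union (Set.Ioc_disjoint_Ioi le_rfl) measurableSet_Ioi hIocInt hIoiInt
    have hrpow1 := hrpowInt 1 one_pos
    have hsplitR : (∫ t in Ioi (1:ℝ), t ^ (-n-1))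
        = (∫ t in Ioc (1:ℝ) T', t ^ (-n-1)) + ∫ t in Ioi T', t ^ (-n-1) := by
      rw [← Set.Ioc_union_Ioi_eq_Ioi hT'1.le]
      exact setIntegral_union (Set.Ioc_disjoint_Ioi le_rfl) measurableSet_Ioi
        (hrpow1.mono_set Set.Ioc_subset_Ioi_self) (hrpowInt T' hT'pos)
    have hA : (∫ t in Ioi (1:ℝ), t ^ (-n-1)) = 1 / n := by
      rw [integral_Ioi_rpow_of_lt (by linarith) one_pos, Real.one_rpow,
        show (-n - 1 + 1 : ℝ) = -n by ring]
      field_simp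
    have hB : (∫ t in Ioi T', t ^ (-n-1)) = T' ^ (-n) / n := by
      rw [integral_Ioi_rpow_of_lt (by linarith) hT'pos,
        show (-n - 1 + 1 : ℝ) = -n by ring]
      field_simp
    have hb1 : r * K₁ * (∫ t in Ioc (1:ℝ) T', t ^ (-n-1))
        ≤ ∫ t in Ioc (1:ℝ) T', t ^ (-n-1) * (h (abar * t) + r * K) := by
      rw [← integral_const_mul]
      refine setIntegral_mono_on ((hrpow1.mono_set Set.Ioc_subset_Ioi_self).const_mul _)
        hIocInt measurableSet_Ioc ?_
      intro t ht
      have ht0 : (0:ℝ) < t := lt_trans one_pos ht.1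
      have h1 : r * K₁ ≤ h (abar * t) + r * K := hge _ (by nlinarith [habarpos, ht.1])
      have h2 : (0:ℝ) ≤ t ^ (-n-1) := (Real.rpow_pos_of_pos ht0 _).le
      nlinarith
    have hb2 : (r * K₁ + 1) * (∫ t in Ioi T', t ^ (-n-1))
        ≤ ∫ t in Ioi T', t ^ (-n-1) * (h (abar * t) + r * K) := by
      rw [← integral_const_mul]
      refine setIntegral_mono_on ((hrpowInt T' hT'pos).const_mul _) hIoiInt
        measurableSet_Ioi ?_
      intro t ht
      have ht0 : (0:ℝ) < t := lt_trans one_pos (lt_trans hT'1 ht)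
      have hat : T ≤ abar * t := le_trans hT'T
        (mul_le_mul_of_nonneg_left (le_of_lt (mem_Ioi.1 ht)) habarpos.le)
      have h1 : r * K₁ + 1 - r * K ≤ h (abar * t) := hT _ hat
      have h2 : (0:ℝ) ≤ t ^ (-n-1) := (Real.rpow_pos_of_pos ht0 _).le
      nlinarith
    have hψa := hψeq abar habarpos
    have hBpos : 0 < T' ^ (-n) := Real.rpow_pos_of_pos hT'pos _
    have hFa : F abar = -(r * K₁)
        + n * ∫ t in Ioi (1:ℝ), t ^ (-n-1) * (h (abar * t) + r * K) := by
      simp only [hF]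
      rw [hψa]
    rw [hFa]
    have hs1 := mul_le_mul_of_nonneg_left hb1 hn.le
    have hs2 := mul_le_mul_of_nonneg_left hb2 hn.le
    have hnn : n ≠ 0 := hn.ne'
    have hnA : n * (1 / n : ℝ) = 1 := by field_simp
    have hnB : n * (T' ^ (-n) / n) = T' ^ (-n) := by field_simp
    have hc1 : n * (∫ t in Ioc (1:ℝ) T', t ^ (-n-1)) + n * (∫ t in Ioi T', t ^ (-n-1)) = 1 := by
      have hx := hsplitR
      rw [hA] at hx
      calc n * (∫ t in Ioc (1:ℝ) T', t ^ (-n-1)) + n * (∫ t in Ioi T', t ^ (-n-1))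
          = n * ((∫ t in Ioc (1:ℝ) T', t ^ (-n-1)) + ∫ t in Ioi T', t ^ (-n-1)) := by ring
        _ = n * (1/n) := by rw [← hx]
        _ = 1 := hnA
    have hc2 : n * (∫ t in Ioi T', t ^ (-n-1)) = T' ^ (-n) := by rw [hB]; exact hnB
    have hc3 : r * K₁ * (n * (∫ t in Ioc (1:ℝ) T', t ^ (-n-1))
        + n * (∫ t in Ioi T', t ^ (-n-1))) = r * K₁ := by rw [hc1, mul_one]
    have hc4 : n * (∫ t in Ioi (1:ℝ), t ^ (-n-1) * (h (abar * t) + r * K))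
        = n * (∫ t in Ioc (1:ℝ) T', t ^ (-n-1) * (h (abar * t) + r * K))
          + n * (∫ t in Ioi T', t ^ (-n-1) * (h (abar * t) + r * K)) := by
      rw [hsplitFc]; ring
    linarith [hs1, hs2, hc2, hc3, hc4, hBpos, hrK₁]
  set C : ℝ := abar + 1 with hCdef
  have hδC : δdag < C := by simp only [hCdef]; linarith
  have hIccInt : IntegrableOn f (Icc δdag C) := by
    refine (hfInt (δdag/2) (by linarith)).mono_set ?_
    intro x hx
    exact lt_of_lt_of_le (by linarith) hx.1
  have hprim : ContinuousOn (fun α => ∫ t in Ioc δdag α, f t) (Icc δdag C) :=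
    intervalIntegral.continuousOn_primitive hIccInt
  have hrpowCont : ContinuousOn (fun α : ℝ => α ^ n) (Icc δdag C) := by
    apply ContinuousOn.rpow_const continuousOn_id
    intro x hx
    exact Or.inl (ne_of_gt (lt_of_lt_of_le hδdag hx.1))
  have hΦcont : ContinuousOn (fun α => -(r * K₁) + n * (α ^ n * (- ∫ t in Ioc δdag α, f t)))
      (Icc δdag C) :=
    continuousOn_const.add (continuousOn_const.mul (hrpowCont.mul hprim.neg))
  have hFeqΦ : EqOn F (fun α => -(r * K₁) + n * (α ^ n * (- ∫ t in Ioc δdag α, f t)))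
      (Icc δdag C) := by
    intro α hα
    have hsp := hGsplit δdag α hδdag hα.1
    rw [hδdagEq] at hsp
    simp only [hF]
    rw [show (∫ s in Ioi α, f s) = - ∫ t in Ioc δdag α, f t by linarith]
  have hFcont : ContinuousOn F (Icc δdag C) := hΦcont.congr hFeqΦ
  set A : Set ℝ := {α : ℝ | δdag ≤ α ∧ F α ≤ 0} with hAdef
  have hδA : δdag ∈ A := ⟨le_refl _, by rw [hFδ]; linarith⟩
  have hAne : A.Nonempty := ⟨δdag, hδA⟩
  have hAub : ∀ α ∈ A, α ≤ abar := by
    intro α hα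
    by_contra hcon
    push_neg at hcon
    have hFlt := hFmono (mem_Ioi.2 habarpos)
      (mem_Ioi.2 (lt_of_lt_of_le hδdag hα.1)) hcon
    linarith [hα.2, hFabar]
  have hAbdd : BddAbove A := ⟨abar, hAub⟩
  set αhat : ℝ := sSup A with hαhatdef
  have hαhat_ge : δdag ≤ αhat := le_csSup hAbdd hδA
  have habarIcc : abar ∈ Icc δdag C := ⟨hgoal1.le, by simp only [hCdef]; linarith⟩
  have hβex : ∃ β : ℝ, δdag < β ∧ β < abar ∧ 0 < F β := by
    have hcw : ContinuousWithinAt F (Icc δdag C) abar := hFcont abar habarIcc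
    have hmem : F ⁻¹' (Ioi 0) ∈ 𝓝[Icc δdag C] abar := hcw (Ioi_mem_nhds hFabar)
    obtain ⟨U, hUopen, hUmem, hUsub⟩ := mem_nhdsWithin.1 hmem
    have hU' : U ∩ Ioo δdag abar ∈ 𝓝[<] abar :=
      inter_mem (mem_nhdsWithin_of_mem_nhds (hUopen.mem_nhds hUmem))
        (Ioo_mem_nhdsLT hgoal1)
    obtain ⟨β, hβU, hβIoo⟩ := Filter.nonempty_of_mem hU'
    refine ⟨β, hβIoo.1, hβIoo.2, ?_⟩
    exact hUsub ⟨hβU, ⟨hβIoo.1.le, by simp only [hCdef]; linarith [hβIoo.2]⟩⟩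
  obtain ⟨β, hβ1, hβ2, hβ3⟩ := hβex
  have hβub : ∀ α ∈ A, α ≤ β := by
    intro α hα
    by_contra hcon
    push_neg at hcon
    have hFlt := hFmono (mem_Ioi.2 (lt_trans hδdag hβ1))
      (mem_Ioi.2 (lt_of_lt_of_le hδdag hα.1)) hcon
    linarith [hα.2]
  have hαhat_lt : αhat < abar := lt_of_le_of_lt (csSup_le hAne hβub) hβ2
  have hαhat_gt : δdag < αhat := by
    have hcw : ContinuousWithinAt F (Icc δdag C) δdag := hFcont δdag ⟨le_refl _, hδC.le⟩
    have hmem : F ⁻¹' (Iio 0) ∈ 𝓝[Icc δdag C] δdag :=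
      hcw (Iio_mem_nhds (by rw [hFδ]; linarith))
    obtain ⟨U, hUopen, hUmem, hUsub⟩ := mem_nhdsWithin.1 hmem
    have hU' : U ∩ Ioo δdag C ∈ 𝓝[>] δdag :=
      inter_mem (mem_nhdsWithin_of_mem_nhds (hUopen.mem_nhds hUmem))
        (Ioo_mem_nhdsGT hδC)
    obtain ⟨γ, hγU, hγIoo⟩ := Filter.nonempty_of_mem hU'
    have hγF : F γ < 0 := hUsub ⟨hγU, ⟨hγIoo.1.le, hγIoo.2.le⟩⟩
    have hγA : γ ∈ A := ⟨hγIoo.1.le, hγF.le⟩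
    exact lt_of_lt_of_le hγIoo.1 (le_csSup hAbdd hγA)
  have hrel : ∀ α : ℝ, δdag ≤ α →
      -(r * K₁) * α ^ (-n) - n * (∫ s in δdag..α, f s) = α ^ (-n) * F α := by
    intro α hα
    have hα0 : 0 < α := lt_of_lt_of_le hδdag hα
    have hinv : α ^ (-n) * α ^ n = 1 := by
      rw [← Real.rpow_add hα0]; norm_num
    rw [hInterval α hα]
    simp only [hF]
    linear_combination (-(n * ∫ s in Ioi α, f s)) * hinv
  have hleft : ∀ α : ℝ, δdag ≤ α → α < αhat →
      -(r * K₁) * α ^ (-n) - n * (∫ s in δdag..α, f s) < 0 := by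
    intro α hα hαlt
    rw [hrel α hα]
    have hα0 : 0 < α := lt_of_lt_of_le hδdag hα
    obtain ⟨γ, hγA, hαγ⟩ := exists_lt_of_lt_csSup hAne hαlt
    have hFα : F α < 0 := lt_of_lt_of_le
      (hFmono (mem_Ioi.2 hα0) (mem_Ioi.2 (lt_of_lt_of_le hδdag hγA.1)) hαγ) hγA.2
    exact mul_neg_of_pos_of_neg (Real.rpow_pos_of_pos hα0 _) hFα
  have hright : ∀ α : ℝ, αhat < α →
      0 < -(r * K₁) * α ^ (-n) - n * ∫ s in δdag..α, f s := by
    intro α hαlt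
    have hα : δdag ≤ α := (hαhat_ge.trans_lt hαlt).le
    rw [hrel α hα]
    have hα0 : 0 < α := lt_of_lt_of_le hδdag hα
    have hFα : 0 < F α := by
      by_contra hcon
      push_neg at hcon
      have hmem : α ∈ A := ⟨hα, hcon⟩
      exact absurd (le_csSup hAbdd hmem) (not_le.2 hαlt)
    exact mul_pos (Real.rpow_pos_of_pos hα0 _) hFα
  refine ⟨hgoal1, ⟨αhat, ⟨⟨hαhat_gt, hαhat_lt⟩, hleft, hright⟩, ?_⟩⟩
  rintro y ⟨⟨hy1, hy2⟩, hyL, hyR⟩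
  rcases lt_trichotomy y αhat with hlt | heq | hgt
  · exfalso
    have h1 : δdag ≤ (y + αhat) / 2 := by linarith
    have h2 : (y + αhat) / 2 < αhat := by linarith
    have h3 : y < (y + αhat) / 2 := by linarith
    have ha := hleft ((y + αhat) / 2) h1 h2
    have hb := hyR ((y + αhat) / 2) h3
    linarith
  · exact heq
  · exfalso
    have h1 : δdag ≤ (αhat + y) / 2 := by linarith [hαhat_gt]
    have h2 : (αhat + y) / 2 < y := by linarith
    have h3 : αhat < (αhat + y) / 2 := by linarith
    have ha := hyL ((αhat + y) / 2) h1 h2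
    have hb := hright ((αhat + y) / 2) h3
    linarith
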